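/- arXiv:quant-ph/0512029 — 3 statements merged into one kernel-verified Lean document; each statement's English description precedes it below -/
import Mathlib

section
/- Let H be a finite-dimensional complex Hilbert space and n ≥ 1. For every POVM Π = (Π_0,…,Π_n) on H^{⊗(n+1)} that is an unambiguous programmable discriminator for n states in H, there exists a POVM Ξ = (Ξ_0,…,Ξ_n) on H^{⊗(n+1)} that is also an unambiguous programmable discriminator, has efficiency p(Ξ) ≥ p(Π), and is permutation covariant: for every permutation σ ∈ S_n and every i ∈ {1,…,n}, (σ⁻¹_P ⊗ I_D) Ξ_i (σ_P ⊗ I_D) = Ξ_{σ(i)}, where σ_P is the unitary on the first n tensor factors (the program registers) permuting them according to σ and I_D is the identity on the last factor (the data register). -/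
open scoped BigOperators ComplexOrder ComplexInnerProductSpace

noncomputable section

/-- `H`, a model of an `m`-dimensional complex Hilbert space. -/
abbrev Hsp (m : ℕ) : Type := EuclideanSpace ℂ (Fin m)
/-- `H^{⊗n}`, a model of the `n`-fold tensor power of `H`. -/
abbrev Tpow (m n : ℕ) : Type := EuclideanSpace ℂ (Fin n → Fin m)

/-- The product vector `φ₁ ⊗ ⋯ ⊗ φₙ` in `H^{⊗n}`. -/
def prodVec {m n : ℕ} (φ : Fin n → Hsp m) : Tpow m n :=
  WithLp.toLp 2 (fun ω => ∏ i, φ i (ω i))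

/-- The antisymmetric tensor product
`φ₁ ∧ ⋯ ∧ φₙ = (1/√(n!)) Σ_{σ ∈ Sₙ} sgn(σ) φ_{σ(1)} ⊗ ⋯ ⊗ φ_{σ(n)}`. -/
def wedge {m n : ℕ} (φ : Fin n → Hsp m) : Tpow m n :=
  ((Real.sqrt n.factorial : ℂ))⁻¹ •
    ∑ σ : Equiv.Perm (Fin n), ((Equiv.Perm.sign σ : ℤ) : ℂ) • prodVec (fun i => φ (σ i))

/-- The antisymmetric subspace `∧ⁿ H` of `H^{⊗n}`: the span of all antisymmetric
tensor products. -/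
def antisymSub (m n : ℕ) : Submodule ℂ (Tpow m n) :=
  Submodule.span ℂ (Set.range (fun φ : Fin n → Hsp m => wedge φ))

/-- The orthogonal projector `Φ(n)` of `H^{⊗n}` onto the antisymmetric subspace `∧ⁿ H`. -/
def asProj (m n : ℕ) : Tpow m n →L[ℂ] Tpow m n :=
  (antisymSub m n).subtypeL.comp ((antisymSub m n).orthogonalProjection)

/-- Matrix entries of an operator on `EuclideanSpace ℂ ι` w.r.t. the standard
orthonormal basis. -/
def matOf {ι : Type} [Fintype ι] [DecidableEq ι]
    (T : EuclideanSpace ℂ ι →L[ℂ] EuclideanSpace ℂ ι) : Matrix ι ι ℂ :=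
  Matrix.of fun a b => ⟪EuclideanSpace.single a 1, T (EuclideanSpace.single b 1)⟫

/-- The operator on `EuclideanSpace ℂ ι` with the given matrix in the standard basis. -/
def matCLM {ι : Type} [Fintype ι] [DecidableEq ι] (M : Matrix ι ι ℂ) :
    EuclideanSpace ℂ ι →L[ℂ] EuclideanSpace ℂ ι :=
  LinearMap.toContinuousLinearMap (Matrix.toEuclideanLin M)

/-- The total input state `|ψ_j^n⟩ = ψ₁ ⊗ ⋯ ⊗ ψₙ ⊗ ψ_j` in `H^{⊗(n+1)}`:
the `n` program registers hold `ψ₁, …, ψₙ` and the data register holds `ψ_j`. -/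
def inputVec {m n : ℕ} (ψ : Fin n → Hsp m) (j : Fin n) : Tpow m (n+1) :=
  WithLp.toLp 2 (fun ω => (∏ i, ψ i (ω i.castSucc)) * ψ j (ω (Fin.last n)))

/-- Partial trace of an operator on `H^{⊗(n+1)}` over the `p`-th tensor factor,
yielding an operator on the remaining `n` factors kept in their original order. -/
def ptraceAt {m n : ℕ} (p : Fin (n+1)) (T : Tpow m (n+1) →L[ℂ] Tpow m (n+1)) :
    Tpow m n →L[ℂ] Tpow m n :=
  matCLM (Matrix.of fun ω ω' : Fin n → Fin m =>
    ∑ k : Fin m, matOf T (p.insertNth k ω) (p.insertNth k ω'))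

/-- A POVM with outcomes `0, 1, …, n` on `H^{⊗(n+1)}`: positive semidefinite
operators summing to the identity. -/
def IsPOVM {m n : ℕ} (P : Fin (n+1) → (Tpow m (n+1) →L[ℂ] Tpow m (n+1))) : Prop :=
  (∀ i, (P i).IsPositive) ∧ ∑ i, P i = 1

/-- Unambiguous programmable discriminator: `⟨ψ_j^n|Π_i|ψ_j^n⟩ = 0` for all unit
vectors `ψ₁, …, ψₙ` and all `i, j ∈ {1, …, n}` with `j ≠ i` (outcome `i ∈ {1, …, n}`
is indexed by `i.succ : Fin (n+1)`, outcome `0` being the inconclusive one). -/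
def IsUPD {m n : ℕ} (P : Fin (n+1) → (Tpow m (n+1) →L[ℂ] Tpow m (n+1))) : Prop :=
  ∀ ψ : Fin n → Hsp m, (∀ k, ‖ψ k‖ = 1) → ∀ i j : Fin n, j ≠ i →
    ⟪inputVec ψ j, P i.succ (inputVec ψ j)⟫ = 0

/-- Minimax efficiency of a programmable discriminator: the infimum, over all linearly
independent tuples of unit vectors `ψ` and all `i ∈ {1, …, n}`, of the success
probability `⟨ψ_i^n|Π_i|ψ_i^n⟩`. -/
def eff {m n : ℕ} (P : Fin (n+1) → (Tpow m (n+1) →L[ℂ] Tpow m (n+1))) : ℝ :=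
  sInf {x : ℝ | ∃ ψ : Fin n → Hsp m, (∀ k, ‖ψ k‖ = 1) ∧ LinearIndependent ℂ ψ ∧
    ∃ i : Fin n, x = (⟪inputVec ψ i, P i.succ (inputVec ψ i)⟫).re}

/-- The index-permutation underlying `σ_P ⊗ I_D`: slot `j < n` reads slot `σ(j)`,
the last slot (data register) is untouched. -/
def permIdx {m n : ℕ} (σ : Equiv.Perm (Fin n)) (ω : Fin (n+1) → Fin m) :
    Fin (n+1) → Fin m :=
  Fin.lastCases (ω (Fin.last n)) (fun j => ω ((σ j).castSucc))

/-- `σ_P ⊗ I_D`: the unitary on `H^{⊗(n+1)}` sending `φ₁ ⊗ ⋯ ⊗ φₙ ⊗ φ_{n+1}` to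
`φ_{σ(1)} ⊗ ⋯ ⊗ φ_{σ(n)} ⊗ φ_{n+1}` (program registers permuted by `σ`, data
register untouched). -/
def permP {m n : ℕ} (σ : Equiv.Perm (Fin n)) : Tpow m (n+1) →L[ℂ] Tpow m (n+1) :=
  LinearMap.toContinuousLinearMap
    { toFun := fun v => WithLp.toLp 2 (fun ω => v (permIdx σ⁻¹ ω))
      map_add' := fun _ _ => rfl
      map_smul' := fun _ _ => rfl }


section Aux

open ContinuousLinearMap

variable {m n : ℕ}

@[simp] lemma permIdx_last (σ : Equiv.Perm (Fin n)) (ω : Fin (n+1) → Fin m) :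
    permIdx σ ω (Fin.last n) = ω (Fin.last n) := by simp [permIdx]

@[simp] lemma permIdx_castSucc (σ : Equiv.Perm (Fin n)) (ω : Fin (n+1) → Fin m) (j : Fin n) :
    permIdx σ ω j.castSucc = ω ((σ j).castSucc) := by simp [permIdx]

lemma permIdx_comp (α β : Equiv.Perm (Fin n)) (ω : Fin (n+1) → Fin m) :
    permIdx (m := m) β (permIdx α ω) = permIdx (α * β) ω := by
  funext k
  refine Fin.lastCases ?_ (fun j => ?_) k <;> simp

@[simp] lemma permIdx_one (ω : Fin (n+1) → Fin m) :
    permIdx (m := m) (1 : Equiv.Perm (Fin n)) ω = ω := by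
  funext k
  refine Fin.lastCases ?_ (fun j => ?_) k <;> simp

lemma permP_apply (σ : Equiv.Perm (Fin n)) (v : Tpow m (n+1)) (ω : Fin (n+1) → Fin m) :
    permP σ v ω = v (permIdx σ⁻¹ ω) := rfl

lemma permP_comp_apply (σ τ : Equiv.Perm (Fin n)) (v : Tpow m (n+1)) :
    permP σ (permP τ v) = permP (τ * σ) v := by
  ext ω
  rw [permP_apply, permP_apply, permP_apply, permIdx_comp, mul_inv_rev]

@[simp] lemma permP_one_apply (v : Tpow m (n+1)) :
    permP (m := m) (1 : Equiv.Perm (Fin n)) v = v := by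
  ext ω; rw [permP_apply, inv_one, permIdx_one]

/-- `permIdx σ` as an equiv on the index set. -/
def permIdxE (σ : Equiv.Perm (Fin n)) : (Fin (n+1) → Fin m) ≃ (Fin (n+1) → Fin m) where
  toFun := permIdx σ
  invFun := permIdx σ⁻¹
  left_inv := fun ω => by rw [permIdx_comp]; simp
  right_inv := fun ω => by rw [permIdx_comp]; simp

lemma inner_permP (σ : Equiv.Perm (Fin n)) (u v : Tpow m (n+1)) :
    ⟪permP σ u, permP σ v⟫ = ⟪u, v⟫ := by
  simp only [PiLp.inner_apply, RCLike.inner_apply, permP_apply]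
  exact Equiv.sum_comp (permIdxE σ⁻¹) (fun ω => v ω * (starRingEnd ℂ) (u ω))

lemma permP_inv_eq_adjoint (σ : Equiv.Perm (Fin n)) :
    permP (m := m) σ⁻¹ = ContinuousLinearMap.adjoint (permP σ) := by
  rw [ContinuousLinearMap.eq_adjoint_iff]
  intro x y
  rw [← inner_permP σ (permP σ⁻¹ x) y, permP_comp_apply, inv_mul_cancel, permP_one_apply]

lemma isPositive_real_smul {E : Type*} [NormedAddCommGroup E] [InnerProductSpace ℂ E]
    [CompleteSpace E] {T : E →L[ℂ] E} (hT : T.IsPositive) {c : ℝ} (hc : 0 ≤ c) :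
    (((c : ℂ)) • T).IsPositive := by
  exact hT.smul_of_nonneg (Complex.zero_le_real.mpr hc)

lemma isPositive_sum {E : Type*} [NormedAddCommGroup E] [InnerProductSpace ℂ E]
    [CompleteSpace E] {ι : Type*} (s : Finset ι) (f : ι → E →L[ℂ] E)
    (h : ∀ i ∈ s, (f i).IsPositive) : (∑ i ∈ s, f i).IsPositive :=
  Finset.sum_induction f _ (fun _ _ ha hb => ha.add hb) ContinuousLinearMap.isPositive_zero h

/-- extension of a permutation of `Fin n` to `Fin (n+1)` fixing `0`. -/
def extE {n : ℕ} (α : Equiv.Perm (Fin n)) : Equiv.Perm (Fin (n+1)) where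
  toFun := Fin.cases 0 (fun i => (α i).succ)
  invFun := Fin.cases 0 (fun i => (α⁻¹ i).succ)
  left_inv := by
    intro k
    induction k using Fin.cases <;> simp
  right_inv := by
    intro k
    induction k using Fin.cases <;> simp

@[simp] lemma extE_succ {n : ℕ} (α : Equiv.Perm (Fin n)) (i : Fin n) :
    extE α i.succ = (α i).succ := by
  simp [extE]

/-- The symmetrized POVM. -/
def symU {m n : ℕ} (P : Fin (n+1) → (Tpow m (n+1) →L[ℂ] Tpow m (n+1))) :
    Fin (n+1) → (Tpow m (n+1) →L[ℂ] Tpow m (n+1)) := fun k =>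
  ((n.factorial : ℂ))⁻¹ •
    ∑ σ : Equiv.Perm (Fin n), (permP σ⁻¹).comp ((P (extE σ⁻¹ k)).comp (permP σ))

lemma symU_apply {m n : ℕ} (P : Fin (n+1) → (Tpow m (n+1) →L[ℂ] Tpow m (n+1)))
    (k : Fin (n+1)) (v : Tpow m (n+1)) :
    symU P k v = ((n.factorial : ℂ))⁻¹ •
      ∑ σ : Equiv.Perm (Fin n), permP σ⁻¹ (P (extE σ⁻¹ k) (permP σ v)) := by
  simp [symU, ContinuousLinearMap.sum_apply]

lemma inner_symU {m n : ℕ} (P : Fin (n+1) → (Tpow m (n+1) →L[ℂ] Tpow m (n+1)))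
    (k : Fin (n+1)) (v : Tpow m (n+1)) :
    ⟪v, symU P k v⟫ = ((n.factorial : ℂ))⁻¹ *
      ∑ σ : Equiv.Perm (Fin n), ⟪permP σ v, P (extE σ⁻¹ k) (permP σ v)⟫ := by
  rw [symU_apply, inner_smul_right, inner_sum]
  congr 1
  apply Finset.sum_congr rfl
  intro σ _
  rw [← inner_permP σ v (permP σ⁻¹ (P (extE σ⁻¹ k) (permP σ v))), permP_comp_apply,
    inv_mul_cancel, permP_one_apply]

lemma permP_inputVec (σ : Equiv.Perm (Fin n)) (ψ : Fin n → Hsp m) (j : Fin n) :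
    permP σ (inputVec ψ j) = inputVec (fun i => ψ (σ i)) (σ⁻¹ j) := by
  ext ω
  rw [permP_apply]
  show (∏ i, ψ i (permIdx σ⁻¹ ω i.castSucc)) * ψ j (permIdx σ⁻¹ ω (Fin.last n))
      = (∏ i, ψ (σ i) (ω i.castSucc)) * ψ (σ (σ⁻¹ j)) (ω (Fin.last n))
  rw [Equiv.Perm.coe_inv, Equiv.apply_symm_apply, permIdx_last]
  congr 1
  rw [← Equiv.prod_comp σ (fun i => ψ i (permIdx σ⁻¹ ω i.castSucc))]
  apply Finset.prod_congr rfl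
  intro i _
  rw [permIdx_castSucc, Equiv.Perm.coe_inv, Equiv.symm_apply_apply]


private lemma smul_smul_nsmul_one {m n : ℕ} :
    ((n.factorial : ℂ))⁻¹ • (n.factorial • (1 : Tpow m (n+1) →L[ℂ] Tpow m (n+1))) = 1 := by
  rw [← Nat.cast_smul_eq_nsmul ℂ, smul_smul, inv_mul_cancel₀, one_smul]
  exact_mod_cast Nat.factorial_ne_zero n

lemma isPositive_symU_aux {m n : ℕ}
    (f : Equiv.Perm (Fin n) → (Tpow m (n+1) →L[ℂ] Tpow m (n+1)))
    (h : ∀ σ, (f σ).IsPositive) :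
    (((n.factorial : ℂ))⁻¹ • ∑ σ : Equiv.Perm (Fin n), f σ).IsPositive := by
  have hc : ((n.factorial : ℂ))⁻¹ = Complex.ofReal (((n.factorial : ℝ))⁻¹) := by
    rw [Complex.ofReal_inv, Complex.ofReal_natCast]
  rw [hc]
  exact isPositive_real_smul (isPositive_sum _ _ (fun σ _ => h σ)) (by positivity)

lemma symU_isPOVM {m n : ℕ} {P : Fin (n+1) → (Tpow m (n+1) →L[ℂ] Tpow m (n+1))}
    (hP : IsPOVM P) : IsPOVM (symU P) := by
  constructor
  · intro k
    have hpos : ∀ σ : Equiv.Perm (Fin n),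
        ((permP (m := m) σ⁻¹).comp ((P (extE σ⁻¹ k)).comp (permP σ))).IsPositive := by
      intro σ
      have h := (hP.1 (extE σ⁻¹ k)).adjoint_conj (permP σ)
      rwa [← permP_inv_eq_adjoint] at h
    exact isPositive_symU_aux
      (fun σ => (permP σ⁻¹).comp ((P (extE σ⁻¹ k)).comp (permP σ))) hpos
  · have key : ∀ σ : Equiv.Perm (Fin n),
        ∑ k, (permP (m := m) σ⁻¹).comp ((P (extE σ⁻¹ k)).comp (permP σ)) = 1 := by
      intro σ
      rw [Equiv.sum_comp (extE σ⁻¹) (fun k => (permP σ⁻¹).comp ((P k).comp (permP σ)))]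
      refine ContinuousLinearMap.ext fun v => ?_
      have h1 : (∑ k, (permP (m := m) σ⁻¹).comp ((P k).comp (permP σ))) v
          = ∑ k, permP σ⁻¹ (P k (permP σ v)) := by
        rw [ContinuousLinearMap.sum_apply]; rfl
      rw [h1, ← map_sum, ← ContinuousLinearMap.sum_apply, hP.2]
      show permP σ⁻¹ (permP σ v) = v
      rw [permP_comp_apply, mul_inv_cancel, permP_one_apply]
    have h2 : ∑ k, symU P k = ((n.factorial : ℂ))⁻¹ • ∑ σ : Equiv.Perm (Fin n),
        ∑ k, (permP (m := m) σ⁻¹).comp ((P (extE σ⁻¹ k)).comp (permP σ)) := by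
      unfold symU
      rw [← Finset.smul_sum, Finset.sum_comm]
    rw [h2]
    have h3 : ∀ σ : Equiv.Perm (Fin n), σ ∈ (Finset.univ : Finset (Equiv.Perm (Fin n))) →
        ∑ k, (permP (m := m) σ⁻¹).comp ((P (extE σ⁻¹ k)).comp (permP σ))
          = (1 : Tpow m (n+1) →L[ℂ] Tpow m (n+1)) := fun σ _ => key σ
    rw [Finset.sum_congr rfl h3, Finset.sum_const, Finset.card_univ, Fintype.card_perm,
      Fintype.card_fin, smul_smul_nsmul_one]

lemma symU_isUPD {m n : ℕ} {P : Fin (n+1) → (Tpow m (n+1) →L[ℂ] Tpow m (n+1))}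
    (hUP : IsUPD P) : IsUPD (symU P) := by
  intro ψ hψ i j hji
  rw [inner_symU]
  have h0 : ∀ σ : Equiv.Perm (Fin n), σ ∈ (Finset.univ : Finset (Equiv.Perm (Fin n))) →
      (⟪permP σ (inputVec ψ j), P (extE σ⁻¹ i.succ) (permP σ (inputVec ψ j))⟫ : ℂ) = 0 := by
    intro σ _
    rw [permP_inputVec, extE_succ]
    refine hUP (fun k => ψ (σ k)) (fun k => hψ _) (σ⁻¹ i) (σ⁻¹ j) (fun h => hji ?_)
    have := congrArg σ h
    simpa using this
  rw [Finset.sum_congr rfl h0, Finset.sum_const, smul_zero, mul_zero]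


lemma eff_le_eff_symU {m n : ℕ} (hn : 1 ≤ n)
    {P : Fin (n+1) → (Tpow m (n+1) →L[ℂ] Tpow m (n+1))} (hP : IsPOVM P) :
    eff P ≤ eff (symU P) := by
  classical
  by_cases hex : ∃ ψ : Fin n → Hsp m, (∀ k, ‖ψ k‖ = 1) ∧ LinearIndependent ℂ ψ
  · obtain ⟨ψ0, hψ0, hli0⟩ := hex
    have hbdd : BddBelow {x : ℝ | ∃ ψ : Fin n → Hsp m, (∀ k, ‖ψ k‖ = 1) ∧
        LinearIndependent ℂ ψ ∧
        ∃ i : Fin n, x = (⟪inputVec ψ i, P i.succ (inputVec ψ i)⟫).re} := by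
      refine ⟨0, ?_⟩
      rintro x ⟨ψ, hψ, hli, i, rfl⟩
      have := (hP.1 i.succ).inner_nonneg_right (inputVec ψ i)
      simpa using (Complex.nonneg_iff.mp this).1
    unfold eff
    refine le_csInf ⟨_, ψ0, hψ0, hli0, ⟨0, hn⟩, rfl⟩ ?_
    rintro b ⟨ψ, hψ, hli, i, rfl⟩
    rw [inner_symU]
    have hc : ((n.factorial : ℂ))⁻¹ = Complex.ofReal (((n.factorial : ℝ))⁻¹) := by
      rw [Complex.ofReal_inv, Complex.ofReal_natCast]
    rw [hc, Complex.re_ofReal_mul, Complex.re_sum]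
    have hterm : ∀ σ : Equiv.Perm (Fin n), σ ∈ (Finset.univ : Finset (Equiv.Perm (Fin n))) →
        eff P ≤ (⟪permP σ (inputVec ψ i),
          P (extE σ⁻¹ i.succ) (permP σ (inputVec ψ i))⟫).re := by
      intro σ _
      rw [permP_inputVec, extE_succ]
      refine csInf_le hbdd ?_
      exact ⟨fun k => ψ (σ k), fun k => hψ _, hli.comp σ σ.injective, σ⁻¹ i, rfl⟩
    have hsum : (n.factorial : ℝ) * eff P ≤ ∑ σ : Equiv.Perm (Fin n),
        (⟪permP σ (inputVec ψ i), P (extE σ⁻¹ i.succ) (permP σ (inputVec ψ i))⟫).re := by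
      have h := Finset.card_nsmul_le_sum Finset.univ _ (eff P) hterm
      rwa [Finset.card_univ, Fintype.card_perm, Fintype.card_fin, nsmul_eq_mul] at h
    have hne : (0:ℝ) < (n.factorial : ℝ) := by positivity
    calc eff P = ((n.factorial : ℝ))⁻¹ * ((n.factorial : ℝ) * eff P) := by
          field_simp
      _ ≤ _ := mul_le_mul_of_nonneg_left hsum (by positivity)
  · have hgen : ∀ Q : Fin (n+1) → (Tpow m (n+1) →L[ℂ] Tpow m (n+1)), eff Q = 0 := by
      intro Q
      unfold eff
      have he : {x : ℝ | ∃ ψ : Fin n → Hsp m, (∀ k, ‖ψ k‖ = 1) ∧ LinearIndependent ℂ ψ ∧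
          ∃ i : Fin n, x = (⟪inputVec ψ i, Q i.succ (inputVec ψ i)⟫).re} = ∅ := by
        refine Set.eq_empty_iff_forall_notMem.2 ?_
        rintro x ⟨ψ, h1, h2, -⟩
        exact hex ⟨ψ, h1, h2⟩
      rw [he, Real.sInf_empty]
    rw [hgen P, hgen (symU P)]


end Aux

/- STATEMENT 9: `permP` really is the permutation operator on product vectors, and
every unambiguous programmable discriminator can be replaced by one with at least the
same efficiency which is permutation covariant:
(σ⁻¹_P ⊗ I_D) Ξ_i (σ_P ⊗ I_D) = Ξ_{σ(i)} for all σ ∈ Sₙ and i ∈ {1, …, n}. -/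
theorem exists_permutation_covariant_UPD_of_UPD
    (m n : ℕ) (hn : 1 ≤ n)
    (P : Fin (n+1) → (Tpow m (n+1) →L[ℂ] Tpow m (n+1)))
    (hP : IsPOVM P) (hUP : IsUPD P) :
    (∀ (σ : Equiv.Perm (Fin n)) (φ : Fin (n+1) → Hsp m),
        permP σ (prodVec φ) =
          prodVec (Fin.lastCases (φ (Fin.last n)) (fun j => φ ((σ j).castSucc)))) ∧
    ∃ Ξ : Fin (n+1) → (Tpow m (n+1) →L[ℂ] Tpow m (n+1)),
      IsPOVM Ξ ∧ IsUPD Ξ ∧ eff P ≤ eff Ξ ∧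
      ∀ (σ : Equiv.Perm (Fin n)) (i : Fin n),
        (permP σ⁻¹).comp ((Ξ i.succ).comp (permP σ)) = Ξ (σ i).succ := by
  constructor
  · intro σ φ
    ext ω
    rw [permP_apply]
    show (∏ i, φ i (permIdx σ⁻¹ ω i))
        = ∏ i, (Fin.lastCases (φ (Fin.last n)) (fun j => φ ((σ j).castSucc)) : Fin (n+1) → Hsp m) i (ω i)
    rw [Fin.prod_univ_castSucc, Fin.prod_univ_castSucc, permIdx_last]
    simp only [Fin.lastCases_last, Fin.lastCases_castSucc]
    congr 1
    rw [← Equiv.prod_comp σ (fun j => φ j.castSucc (permIdx (m := m) σ⁻¹ ω j.castSucc))]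
    refine Finset.prod_congr rfl (fun j _ => ?_)
    rw [permIdx_castSucc, Equiv.Perm.coe_inv, Equiv.symm_apply_apply]
  · refine ⟨symU P, symU_isPOVM hP, symU_isUPD hUP, eff_le_eff_symU hn hP, ?_⟩
    intro σ i
    refine ContinuousLinearMap.ext fun v => ?_
    show permP σ⁻¹ (symU P i.succ (permP σ v)) = symU P (σ i).succ v
    rw [symU_apply, symU_apply, map_smul, map_sum]
    congr 1
    rw [← Equiv.sum_comp (Equiv.mulLeft σ)
      (fun ρ => permP (m := m) ρ⁻¹ (P (extE ρ⁻¹ (σ i).succ) (permP ρ v)))]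
    apply Finset.sum_congr rfl
    intro τ _
    rw [permP_comp_apply, permP_comp_apply, extE_succ, extE_succ]
    simp [mul_inv_rev, Equiv.Perm.mul_apply, Equiv.symm_apply_apply]
end
end

section
/- Let H_A and H_B be finite-dimensional complex Hilbert spaces, let Ω be a positive semidefinite operator on H_A ⊗ H_B, and let |φ⟩ ∈ H_B be a unit vector. If the support of the partial trace Tr_A(Ω) is contained in the one-dimensional span of |φ⟩, then Ω = (Tr_B Ω) ⊗ |φ⟩⟨φ|. -/
/- STATEMENT 11: Let Ω be positive semidefinite on H_A ⊗ H_B (matrix indexed by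
A × B), φ ∈ H_B a unit vector.  If the support of Tr_A(Ω) — the orthogonal complement
of its kernel — is contained in the span of φ, then Ω = (Tr_B Ω) ⊗ |φ⟩⟨φ|. -/

open scoped ComplexOrder BigOperators Matrix ComplexInnerProductSpace Kronecker

noncomputable section


private lemma sum_sum_ite_eq {A B : Type} [Fintype A] [Fintype B] [DecidableEq A]
    (a : A) (F : A → B → ℂ) :
    (∑ x : A, ∑ y : B, if x = a then F x y else 0) = ∑ y : B, F a y := by
  rw [Finset.sum_comm]
  simp [Finset.sum_ite_eq']

theorem eq_kronecker_of_support_ptraceA_le_span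
    {A B : Type} [Fintype A] [Fintype B] [DecidableEq A] [DecidableEq B]
    (Ω : Matrix (A × B) (A × B) ℂ) (hΩ : Ω.PosSemidef)
    (φ : EuclideanSpace ℂ B) (hφ : ‖φ‖ = 1)
    (hsupp :
      (LinearMap.ker (Matrix.toEuclideanLin
          (Matrix.of fun b b' : B => ∑ a : A, Ω (a, b) (a, b'))))ᗮ
        ≤ Submodule.span ℂ {φ}) :
    Ω = (Matrix.of fun a a' : A => ∑ b : B, Ω (a, b) (a', b)) ⊗ₖ
          Matrix.vecMulVec φ (star φ) := by
  classical
  set M : Matrix B B ℂ := Matrix.of fun b b' : B => ∑ a : A, Ω (a, b) (a, b') with hM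
  -- ‖φ‖ = 1 in coordinates
  have hnorm : ∑ b : B, (starRingEnd ℂ) (φ b) * φ b = 1 := by
    have h1 : ⟪φ, φ⟫ = 1 := by
      rw [inner_self_eq_norm_sq_to_K, hφ]; norm_num
    rw [PiLp.inner_apply] at h1
    simp only [RCLike.inner_apply] at h1
    rw [← h1]
    exact Finset.sum_congr rfl fun b _ => mul_comm _ _
  -- hermitian entrywise
  have herm : ∀ p q : A × B, Ω p q = (starRingEnd ℂ) (Ω q p) := by
    intro p q
    have := congrFun (congrFun hΩ.1 p) q
    simpa [Matrix.conjTranspose_apply, RCLike.star_def] using this.symm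
  -- Step A: vectors orthogonal to φ are in the kernel of M
  have hker : ∀ ψ : B → ℂ, (∑ b : B, (starRingEnd ℂ) (φ b) * ψ b) = 0 →
      M *ᵥ ψ = 0 := by
    intro ψ hψ
    set ψ' : EuclideanSpace ℂ B := (WithLp.equiv 2 (B → ℂ)).symm ψ with hψ'
    have hinner : ⟪φ, ψ'⟫ = 0 := by
      simpa [PiLp.inner_apply, RCLike.inner_apply, hψ', mul_comm] using hψ
    have h1 : ψ' ∈ (Submodule.span ℂ {φ})ᗮ :=
      Submodule.mem_orthogonal_singleton_iff_inner_right.mpr hinner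
    have h2 : ψ' ∈ LinearMap.ker (Matrix.toEuclideanLin M) := by
      have h3 := Submodule.orthogonal_le hsupp h1
      rwa [Submodule.orthogonal_orthogonal] at h3
    have h4 : Matrix.toEuclideanLin M ψ' = 0 := LinearMap.mem_ker.mp h2
    have h5 := congrArg (WithLp.equiv 2 (B → ℂ)) h4
    rw [WithLp.equiv_apply, Matrix.ofLp_toEuclideanLin_apply] at h5
    simpa [hψ'] using h5
  -- Step B: key vanishing
  have hzero : ∀ (ψ : B → ℂ), (∑ b : B, (starRingEnd ℂ) (φ b) * ψ b) = 0 →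
      ∀ a0 : A, Ω *ᵥ (fun p : A × B => if p.1 = a0 then ψ p.2 else 0) = 0 := by
    intro ψ hψ a0
    have hMψ := hker ψ hψ
    set u : A → (A × B → ℂ) := fun a p => if p.1 = a then ψ p.2 else 0 with hu
    have hterm : ∀ a : A, star (u a) ⬝ᵥ Ω *ᵥ (u a) =
        ∑ b : B, ∑ b' : B, (starRingEnd ℂ) (ψ b) * Ω (a, b) (a, b') * ψ b' := by
      intro a
      simp only [dotProduct, Matrix.mulVec, Pi.star_apply, hu,
        Fintype.sum_prod_type, apply_ite star, star_zero, ite_mul, mul_ite,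
        zero_mul, mul_zero]
      rw [sum_sum_ite_eq]
      refine Finset.sum_congr rfl fun b _ => ?_
      rw [sum_sum_ite_eq, Finset.mul_sum]
      refine Finset.sum_congr rfl fun b' _ => ?_
      simp [RCLike.star_def, mul_assoc]
    have hsum : ∑ a : A, star (u a) ⬝ᵥ Ω *ᵥ (u a) = 0 := by
      have hrhs : star ψ ⬝ᵥ M *ᵥ ψ = 0 := by rw [hMψ]; simp
      have hlift : ∑ a : A, star (u a) ⬝ᵥ Ω *ᵥ (u a) = star ψ ⬝ᵥ M *ᵥ ψ := by
        rw [Finset.sum_congr rfl fun a _ => hterm a]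
        simp only [dotProduct, Matrix.mulVec, Pi.star_apply, hM,
          Matrix.of_apply, RCLike.star_def, Finset.mul_sum, Finset.sum_mul]
        rw [Finset.sum_comm]
        refine Finset.sum_congr rfl fun b _ => ?_
        rw [Finset.sum_comm]
        refine Finset.sum_congr rfl fun b' _ => ?_
        refine Finset.sum_congr rfl fun a _ => by ring
      rw [hlift, hrhs]
    have hnn : ∀ a ∈ Finset.univ (α := A), 0 ≤ star (u a) ⬝ᵥ Ω *ᵥ (u a) :=
      fun a _ => hΩ.dotProduct_mulVec_nonneg (u a)
    have hzero' : star (u a0) ⬝ᵥ Ω *ᵥ (u a0) = 0 :=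
      (Finset.sum_eq_zero_iff_of_nonneg hnn).mp hsum a0 (Finset.mem_univ a0)
    exact (hΩ.dotProduct_mulVec_zero_iff (u a0)).mp hzero'
  -- Step C: column relation
  have eq1 : ∀ a a' : A, ∀ b b' : B,
      Ω (a, b) (a', b') =
        (starRingEnd ℂ) (φ b') * ∑ c : B, Ω (a, b) (a', c) * φ c := by
    intro a a' b b'
    set ψ : B → ℂ := fun c => (if c = b' then 1 else 0) - (starRingEnd ℂ) (φ b') * φ c
      with hψdef
    have hψorth : (∑ b : B, (starRingEnd ℂ) (φ b) * ψ b) = 0 := by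
      simp only [hψdef, mul_sub, Finset.sum_sub_distrib, mul_ite, mul_one, mul_zero,
        Finset.sum_ite_eq', Finset.mem_univ, if_true]
      have h : ∑ x : B, (starRingEnd ℂ) (φ x) * ((starRingEnd ℂ) (φ b') * φ x)
          = (starRingEnd ℂ) (φ b') * ∑ x : B, (starRingEnd ℂ) (φ x) * φ x := by
        rw [Finset.mul_sum]
        exact Finset.sum_congr rfl fun x _ => by ring
      rw [h, hnorm]; ring
    have h0 := congrFun (hzero ψ hψorth a') (a, b)
    simp only [Matrix.mulVec, dotProduct, Fintype.sum_prod_type, mul_ite,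
      mul_zero, Pi.zero_apply] at h0
    rw [sum_sum_ite_eq] at h0
    simp only [hψdef, mul_sub, Finset.sum_sub_distrib, mul_ite, mul_one, mul_zero,
      Finset.sum_ite_eq', Finset.mem_univ, if_true] at h0
    have h : ∑ c : B, Ω (a, b) (a', c) * ((starRingEnd ℂ) (φ b') * φ c)
        = (starRingEnd ℂ) (φ b') * ∑ c : B, Ω (a, b) (a', c) * φ c := by
      rw [Finset.mul_sum]
      exact Finset.sum_congr rfl fun c _ => by ring
    rw [h] at h0
    exact sub_eq_zero.mp h0
  -- Step C': row relation (via hermitian)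
  have eq1' : ∀ a a' : A, ∀ b b' : B,
      Ω (a, b) (a', b') =
        φ b * ∑ c : B, (starRingEnd ℂ) (φ c) * Ω (a, c) (a', b') := by
    intro a a' b b'
    have h := eq1 a' a b' b
    calc Ω (a, b) (a', b') = (starRingEnd ℂ) (Ω (a', b') (a, b)) := herm _ _
      _ = (starRingEnd ℂ) ((starRingEnd ℂ) (φ b) * ∑ c : B, Ω (a', b') (a, c) * φ c) := by
          rw [← h]
      _ = φ b * ∑ c : B, (starRingEnd ℂ) (φ c) * Ω (a, c) (a', b') := by
          rw [map_mul, RingHomInvPair.comp_apply_eq₂, map_sum]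
          congr 1
          refine Finset.sum_congr rfl fun c _ => ?_
          rw [map_mul, ← herm (a, c) (a', b')]
          ring
  -- Step D: full factorization
  set S : A → A → ℂ := fun a a' =>
    ∑ c : B, ∑ c' : B, (starRingEnd ℂ) (φ c) * (Ω (a, c) (a', c') * φ c') with hS
  have heq2 : ∀ a a' : A, ∀ b b' : B,
      Ω (a, b) (a', b') = φ b * (starRingEnd ℂ) (φ b') * S a a' := by
    intro a a' b b'
    rw [eq1' a a' b b']
    have h : ∑ c : B, (starRingEnd ℂ) (φ c) * Ω (a, c) (a', b')
        = (starRingEnd ℂ) (φ b') * S a a' := by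
      rw [hS, Finset.mul_sum]
      refine Finset.sum_congr rfl fun c _ => ?_
      rw [eq1 a a' c b', Finset.mul_sum, Finset.mul_sum, Finset.mul_sum]
      refine Finset.sum_congr rfl fun c' _ => ?_
      ring
    rw [h]; ring
  -- Step E: partial trace over B equals S
  have htr : ∀ a a' : A, (∑ b : B, Ω (a, b) (a', b)) = S a a' := by
    intro a a'
    have h : ∑ b : B, Ω (a, b) (a', b) = (∑ b : B, φ b * (starRingEnd ℂ) (φ b)) * S a a' := by
      rw [Finset.sum_mul]
      exact Finset.sum_congr rfl fun b _ => heq2 a a' b b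
    rw [h]
    have h2 : ∑ b : B, φ b * (starRingEnd ℂ) (φ b) = 1 := by
      rw [← hnorm]
      exact Finset.sum_congr rfl fun b _ => by ring
    rw [h2, one_mul]
  -- conclude
  ext p q
  obtain ⟨a, b⟩ := p
  obtain ⟨a', b'⟩ := q
  simp only [Matrix.kroneckerMap_apply, Matrix.vecMulVec_apply, Matrix.of_apply,
    Pi.star_apply, RCLike.star_def]
  rw [htr a a', heq2 a a' b b']
  ring
end
end

section
/- For n ≥ 1, consider the real symmetric matrix Λ of size n(n+1) × n(n+1), with rows and columns indexed by pairs (i,k) with i ∈ {1,…,n} and k ∈ {1,…,n+1}, and entries Λ_{(i,k),(j,l)} = δ_{i,j}δ_{k,l} + ((−1)^{i−j+k−l}/n)·(1−δ_{k,l})(1−δ_{i,j}). Then the largest eigenvalue of Λ equals n. -/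
noncomputable section

private lemma sum_ite_ne' (m : ℕ) (a : Fin m) :
    ∑ i : Fin m, (if a = i then (0:ℝ) else 1) = m - 1 := by
  have : ∀ i : Fin m, (if a = i then (0:ℝ) else 1) = 1 - (if a = i then 1 else 0) := by
    intro i; split <;> norm_num
  simp [this, Finset.sum_sub_distrib, Finset.sum_ite_eq]

private lemma sum_mask (n : ℕ) (c : ℝ) (p : Fin n × Fin (n + 1)) :
    ∑ q : Fin n × Fin (n + 1),
      (c * if p.2 = q.2 then (0:ℝ) else 1) * (if p.1 = q.1 then (0:ℝ) else 1)
      = c * ((n:ℝ) * ((n:ℝ) - 1)) := by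
  rw [Fintype.sum_prod_type]
  have h1 : ∀ x1 : Fin n,
      (∑ x2 : Fin (n+1), (c * if p.2 = x2 then (0:ℝ) else 1) * (if p.1 = x1 then (0:ℝ) else 1))
        = (c * (((n+1:ℕ):ℝ) - 1)) * (if p.1 = x1 then (0:ℝ) else 1) := fun x1 => by
    rw [← Finset.sum_mul, ← Finset.mul_sum, sum_ite_ne']
  rw [Finset.sum_congr rfl fun x1 _ => h1 x1, ← Finset.mul_sum, sum_ite_ne']
  push_cast
  ring

theorem lambda_matrix_largest_eigenvalue
    (n : ℕ) (hn : 1 ≤ n) :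
    IsGreatest
      (spectrum ℝ (Matrix.of fun p q : Fin n × Fin (n + 1) =>
        (if p = q then (1 : ℝ) else 0) +
          ((-1 : ℝ) ^ (p.1.val + q.1.val + p.2.val + q.2.val) / n) *
            (if p.2 = q.2 then 0 else 1) * (if p.1 = q.1 then 0 else 1)))
      (n : ℝ) := by
  set A : Matrix (Fin n × Fin (n + 1)) (Fin n × Fin (n + 1)) ℝ :=
    Matrix.of fun p q : Fin n × Fin (n + 1) =>
        (if p = q then (1 : ℝ) else 0) +
          ((-1 : ℝ) ^ (p.1.val + q.1.val + p.2.val + q.2.val) / n) *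
            (if p.2 = q.2 then 0 else 1) * (if p.1 = q.1 then 0 else 1) with hA
  have hn0 : (n : ℝ) ≠ 0 := by positivity
  have hspec : ∀ μ : ℝ, μ ∈ spectrum ℝ A ↔
      Module.End.HasEigenvalue (Matrix.toLin' A) μ := by
    intro μ
    rw [← AlgEquiv.spectrum_eq (Matrix.toLinAlgEquiv' (R := ℝ) (n := Fin n × Fin (n+1))) A,
      ← Module.End.hasEigenvalue_iff_mem_spectrum]
    rfl
  constructor
  · -- membership: eigenvector v p = (-1)^(p.1+p.2)
    rw [hspec]
    set v : Fin n × Fin (n + 1) → ℝ := fun p => (-1 : ℝ) ^ (p.1.val + p.2.val) with hv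
    apply Module.End.hasEigenvalue_of_hasEigenvector (x := v)
    constructor
    · rw [Module.End.mem_eigenspace_iff]
      funext p
      have key : ∀ q : Fin n × Fin (n+1), A p q * v q =
          (if p = q then v p else 0) +
            ((-1 : ℝ) ^ (p.1.val + p.2.val) / n *
              (if p.2 = q.2 then (0:ℝ) else 1)) * (if p.1 = q.1 then (0:ℝ) else 1) := by
        intro q
        have hpow : (-1 : ℝ) ^ (p.1.val + q.1.val + p.2.val + q.2.val) *
            (-1 : ℝ) ^ (q.1.val + q.2.val) = (-1 : ℝ) ^ (p.1.val + p.2.val) := by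
          rw [show p.1.val + q.1.val + p.2.val + q.2.val
              = (p.1.val + p.2.val) + (q.1.val + q.2.val) by ring, pow_add, mul_assoc,
            ← pow_add]
          rw [Even.neg_one_pow ⟨q.1.val + q.2.val, rfl⟩, mul_one]
        simp only [hA, Matrix.of_apply, hv, add_mul]
        congr 1
        · split
          · rename_i h; subst h; rw [one_mul]
          · rw [zero_mul]
        · have hre : ((-1 : ℝ) ^ (p.1.val + q.1.val + p.2.val + q.2.val) / n *
              (if p.2 = q.2 then (0:ℝ) else 1)) * (if p.1 = q.1 then (0:ℝ) else 1) *
                (-1 : ℝ) ^ (q.1.val + q.2.val)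
              = (((-1 : ℝ) ^ (p.1.val + q.1.val + p.2.val + q.2.val) *
                  (-1 : ℝ) ^ (q.1.val + q.2.val)) / n *
                (if p.2 = q.2 then (0:ℝ) else 1)) * (if p.1 = q.1 then (0:ℝ) else 1) := by
            ring
          rw [hre, hpow]
      rw [Matrix.toLin'_apply]
      show ∑ q, A p q * v q = _
      rw [Finset.sum_congr rfl fun q _ => key q, Finset.sum_add_distrib,
        Finset.sum_ite_eq Finset.univ p fun _ => v p, sum_mask]
      simp only [Finset.mem_univ, if_true, Pi.smul_apply, smul_eq_mul]
      rw [hv]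
      field_simp
      ring
    · intro h
      have := congrFun h (⟨0, hn⟩, 0)
      simp [hv] at this
  · -- upper bound via Gershgorin
    intro μ hμ
    rw [hspec] at hμ
    obtain ⟨p, hp⟩ := eigenvalue_mem_ball hμ
    have hdiag : A p p = 1 := by simp [hA]
    have hnorm : ∀ q, ‖A p q‖ = (if p = q then (1:ℝ) else 0) +
        (1 / n * (if p.2 = q.2 then (0:ℝ) else 1)) * (if p.1 = q.1 then (0:ℝ) else 1) := by
      intro q
      by_cases h : p = q
      · subst h; simp [hA]
      · by_cases h1 : p.1 = q.1
        · simp [hA, h, h1]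
        · by_cases h2 : p.2 = q.2
          · simp [hA, h, h1, h2]
          · simp only [hA, Matrix.of_apply, if_neg h, if_neg h1, if_neg h2, zero_add,
              mul_one]
            rw [Real.norm_eq_abs, abs_div, abs_pow, abs_neg, abs_one, one_pow,
              Nat.abs_cast]
    have hrow : ∑ q ∈ Finset.univ.erase p, ‖A p q‖ = (n:ℝ) - 1 := by
      rw [Finset.sum_erase_eq_sub (Finset.mem_univ p),
        Finset.sum_congr rfl fun q _ => hnorm q, Finset.sum_add_distrib,
        Finset.sum_ite_eq Finset.univ p fun _ => (1:ℝ), sum_mask, hnorm p]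
      simp only [Finset.mem_univ, if_true]
      field_simp
      ring
    rw [hrow, Metric.mem_closedBall, hdiag, Real.dist_eq] at hp
    have := (abs_le.mp hp).2
    linarith
end
end
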